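/- Let R be a commutative noetherian ring and 𝔭 a prime ideal. Then the set of associated primes of the injective hull E_R(R/𝔭) is exactly {𝔭}. -/

import Mathlib

/-- Let `R` be a commutative noetherian ring, `𝔭` a prime ideal, and `E` an injective hull
of `R ⧸ 𝔭`: an injective `R`-module together with an injective linear map
`f : R ⧸ 𝔭 →ₗ[R] E` with essential image. Then the set of associated primes of `E` is
exactly `{𝔭}`. -/
theorem associatedPrimes_injective_hull (R : Type*) [CommRing R] [IsNoetherianRing R]
    (p : Ideal R) [p.IsPrime] (E : Type*) [AddCommGroup E] [Module R E]
    (hinj : Module.Injective R E) (f : (R ⧸ p) →ₗ[R] E)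
    (hf : Function.Injective f)
    (hess : ∀ N : Submodule R E, N ≠ ⊥ → N ⊓ LinearMap.range f ≠ ⊥) :
    associatedPrimes R E = {p} := by
  have hp : (p : Ideal R).IsPrime := inferInstance
  ext q
  rw [Set.mem_singleton_iff]
  constructor
  · intro hmem
    obtain ⟨hq, x, hx⟩ := isAssociatedPrime_iff.mp hmem
    -- x ≠ 0
    have hx0 : x ≠ 0 := by
      rintro rfl
      apply hq.ne_top
      rw [hx]
      ext s
      simp [Submodule.mem_colon_singleton]
    have hN : (Submodule.span R {x}) ≠ ⊥ := by
      simpa [Submodule.span_singleton_eq_bot] using hx0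
    obtain ⟨y, hy, hy0⟩ := Submodule.exists_mem_ne_zero_of_ne_bot (hess _ hN)
    obtain ⟨hy1, z, hz⟩ := hy
    obtain ⟨r, hr⟩ := Submodule.mem_span_singleton.mp hy1
    have hz0 : z ≠ 0 := by rintro rfl; simp at hz; exact hy0 hz.symm
    obtain ⟨t, rfl⟩ := Ideal.Quotient.mk_surjective z
    have ht : t ∉ p := by
      intro h
      exact hz0 ((Submodule.Quotient.mk_eq_zero p).mpr h)
    have key : ∀ s : R, s • y = 0 ↔ f (s • Ideal.Quotient.mk p t) = 0 := by
      intro s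
      rw [← hz, ← map_smul]
    have hmk : ∀ s : R, s • (Ideal.Quotient.mk p t : R ⧸ p) = Ideal.Quotient.mk p (s * t) := by
      intro s
      rw [← smul_eq_mul]
      rfl
    apply le_antisymm
    · intro s hs
      have hsx : s • x = 0 := by
        rw [hx] at hs
        exact (Submodule.mem_bot R).mp (Submodule.mem_colon_singleton.mp hs)
      have : s • y = 0 := by rw [← hr, smul_comm, hsx, smul_zero]
      rw [key s, ← map_zero f] at this
      have h2 := hf this
      have h3 : Ideal.Quotient.mk p (s * t) = 0 := by rw [← hmk]; exact h2
      have hst : s * t ∈ p := (Submodule.Quotient.mk_eq_zero p).mp h3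
      exact (hp.mem_or_mem hst).resolve_right ht
    · intro s hs
      have hsz : s • (Ideal.Quotient.mk p t : R ⧸ p) = 0 := by
        rw [hmk, Ideal.Quotient.eq_zero_iff_mem]
        exact p.mul_mem_right t hs
      have hsy : s • y = 0 := by rw [key s, hsz, map_zero]
      rw [← hr, smul_smul] at hsy
      have : s * r ∈ q := by
        rw [hx, Submodule.mem_colon_singleton, Submodule.mem_bot]
        exact hsy
      refine (hq.mem_or_mem this).resolve_right ?_
      intro hrq
      apply hy0
      rw [hx, Submodule.mem_colon_singleton, Submodule.mem_bot] at hrq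
      rw [← hr, hrq]
  · intro h
    rw [h]
    have hp1 : IsAssociatedPrime p (R ⧸ p) := by
      have := associatedPrimes.eq_singleton_of_isPrimary hp.isPrimary
      have : p.radical ∈ associatedPrimes R (R ⧸ p) := by rw [this]; rfl
      rwa [hp.radical] at this
    exact hp1.map_of_injective f hf
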